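/- Let V be a finite-dimensional F-vector space and let Q̃ : (F×V)* → F be a quadratic form. Then for all s ∈ F with s ≠ 0 and s ≠ 1, and every non-identical translation γ : x ↦ x + t (t ≠ 0) of V, the mapping s·γ^β, where γ^β(a₀,a*) = (a₀ − ⟨a*,t⟩, a*), does not belong to the weak orthogonal group O'((F×V)*, Q̃). -/
import Mathlib


/-! Setting: a field `F` and a finite-dimensional `F`-vector space `V`. The dual of
`F × V` is identified with `F × V*` via the pairing `⟨(a₀,a*),(x₀,x)⟩ = a₀x₀ + ⟨a*,x⟩`.
For a quadratic form `Q`, its polar form is `QuadraticMap.polar Q` (the bilinear map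
`Q.polarBilin`) and its radical is `LinearMap.ker Q.polarBilin`. -/

variable {F V : Type*} [Field F] [AddCommGroup V] [Module F V] [FiniteDimensional F V]

/-- The dual linear representation `β` of `AGL(V)` on `(F×V)* = F × V*`: for the affinity
`γ : x ↦ t + g x` (with `g ∈ GL(V)`, `t ∈ V`),
`γ^β (a₀, a*) = (a₀ - ⟨a* ∘ g⁻¹, t⟩, a* ∘ g⁻¹)`. -/
def betaMap (g : V ≃ₗ[F] V) (t : V) :
    (F × Module.Dual F V) →ₗ[F] (F × Module.Dual F V) :=
  LinearMap.prod
    (LinearMap.fst F F (Module.Dual F V) -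
      (Module.Dual.eval F V (g.symm t)).comp (LinearMap.snd F F (Module.Dual F V)))
    ((g.symm.toLinearMap.dualMap).comp (LinearMap.snd F F (Module.Dual F V)))

/-- Given a quadratic form `Q` on `V` whose induced map `D = Q.polarBilin` is bijective
(given here as the linear equivalence `e` with `↑e = Q.polarBilin`), the quadratic form
`Q^↑ : F × V* → F, (a₀, a*) ↦ Q (D⁻¹ a*)`. -/
def qUp (Q : QuadraticForm F V) (e : V ≃ₗ[F] Module.Dual F V) :
    QuadraticForm F (F × Module.Dual F V) :=
  Q.comp (e.symm.toLinearMap ∘ₗ LinearMap.snd F F (Module.Dual F V))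

/-- Given a quadratic form `Q̃` on `F × V*` such that `π ∘ D̃ ∘ π^T : V* → V` is invertible
(given here as the linear equivalence `T`, characterised by
`∀ a b, b (T a) = polar Q̃ (0,a) (0,b)`), the quadratic form
`Q̃^↓ : V → F, x ↦ Q̃ (0, T⁻¹ x)`. -/
def qDown (Qt : QuadraticForm F (F × Module.Dual F V)) (T : Module.Dual F V ≃ₗ[F] V) :
    QuadraticForm F V :=
  Qt.comp ((LinearMap.inr F F (Module.Dual F V)) ∘ₗ T.symm.toLinearMap)

/-- The weak orthogonal group `O'(W,Q)` of a metric vector space, as a set of linear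
endomorphisms: bijective isometries fixing the radical elementwise. -/
def wOrth {W : Type*} [AddCommGroup W] [Module F W] (Qt : QuadraticForm F W) :
    Set (W →ₗ[F] W) :=
  {φ | Function.Bijective φ ∧ (∀ w, Qt (φ w) = Qt w) ∧
    ∀ w ∈ LinearMap.ker Qt.polarBilin, φ w = w}

/-- The `β`-image `AO(V,Q)^β` of the motion group of `(V,Q)`. -/
def motionBetaSet (Q : QuadraticForm F V) :
    Set ((F × Module.Dual F V) →ₗ[F] (F × Module.Dual F V)) :=
  {φ | ∃ (g : V ≃ₗ[F] V) (t : V), (∀ x, Q (g x) = Q x) ∧ φ = betaMap g t}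

/-- The `β`-image `AO'(V,Q)^β` of the weak motion group of `(V,Q)`. -/
def wMotionBetaSet (Q : QuadraticForm F V) :
    Set ((F × Module.Dual F V) →ₗ[F] (F × Module.Dual F V)) :=
  {φ | ∃ (g : V ≃ₗ[F] V) (t : V), (∀ x, Q (g x) = Q x) ∧
    (∀ x ∈ LinearMap.ker Q.polarBilin, g x = x) ∧ φ = betaMap g t}

/-- Corollary 5.10: for every `s ∈ F \ {0,1}` and every non-identical translation
`γ : x ↦ x + t` (`t ≠ 0`), the map `s • γ^β` does not belong to `O'((F×V)*, Q̃)`. -/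
theorem stmt17 (Qt : QuadraticForm F (F × Module.Dual F V))
    (s : F) (hs0 : s ≠ 0) (hs1 : s ≠ 1) (t : V) (ht : t ≠ 0) :
    s • betaMap (LinearEquiv.refl F V) t ∉ wOrth Qt := by
  intro h
  obtain ⟨hbij, hiso, hrad⟩ := h
  set φ := s • betaMap (LinearEquiv.refl F V) t with hφdef
  set u : F × Module.Dual F V := ((1:F), (0:Module.Dual F V)) with hu
  have hβ : ∀ w : F × Module.Dual F V,
      betaMap (LinearEquiv.refl F V) t w = w + (-(w.2 t)) • u := by
    intro w
    simp [betaMap, Prod.ext_iff, hu]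
    ring
  have hφ : ∀ w, φ w = s • w + (s * (-(w.2 t))) • u := by
    intro w
    rw [hφdef, LinearMap.smul_apply, hβ, smul_add, smul_smul]
  have hφu : φ u = s • u := by
    rw [hφ]; simp [hu]
  have hpol : ∀ x y, QuadraticMap.polar Qt (φ x) (φ y) = QuadraticMap.polar Qt x y := by
    intro x y
    simp only [QuadraticMap.polar, ← map_add φ, hiso]
  have E : ∀ y : F × Module.Dual F V,
      (s * s - 1) * QuadraticMap.polar Qt u y
        + s * s * (-(y.2 t)) * QuadraticMap.polar Qt u u = 0 := by
    intro y
    have h1 := hpol u y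
    rw [hφu, hφ y, QuadraticMap.polar_smul_left, QuadraticMap.polar_add_right,
      QuadraticMap.polar_smul_right, QuadraticMap.polar_smul_right] at h1
    simp only [smul_eq_mul] at h1
    linear_combination h1
  -- a functional with value 1 on t
  obtain ⟨f, hf⟩ : ∃ f : Module.Dual F V, f t = 1 := by
    have : ¬ ∀ f : Module.Dual F V, f t = 0 := by
      rw [Module.forall_dual_apply_eq_zero_iff F t]; exact ht
    push_neg at this
    obtain ⟨g, hg⟩ := this
    exact ⟨(g t)⁻¹ • g, by simp [inv_mul_cancel₀ hg]⟩
  set y₁ : F × Module.Dual F V := ((0:F), -f) with hy1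
  have hcy1 : -(y₁.2 t) = 1 := by simp [hy1, hf]
  have key : ∀ z, QuadraticMap.polar Qt u z = 0 := by
    by_cases hsq : s * s = 1
    · -- s = -1 case
      have hsneg : s = -1 := by
        rcases mul_self_eq_one_iff.mp hsq with h | h
        · exact absurd h hs1
        · exact h
      have h2 : (2:F) ≠ 0 := by
        intro h2
        exact hs1 (by rw [hsneg]; linear_combination -h2)
      -- polar u u = 0
      have huu : QuadraticMap.polar Qt u u = 0 := by
        have h3 := E y₁
        rw [hcy1, hsq] at h3
        linear_combination h3
      have hQu : Qt u = 0 := by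
        have h4 := QuadraticMap.polar_self Qt u
        rw [huu] at h4
        have h5 : (2:F) * Qt u = 0 := by
          have h6 := h4.symm
          rw [two_smul] at h6
          linear_combination h6
        rcases mul_eq_zero.mp h5 with h | h
        · exact absurd h h2
        · exact h
      -- c y * polar y u = 0 for all y
      have hc : ∀ y : F × Module.Dual F V, (-(y.2 t)) * QuadraticMap.polar Qt y u = 0 := by
        intro y
        have h1 := hiso y
        rw [hφ y, hsneg] at h1
        have hneg : ((-1:F)) • y + ((-1) * (-(y.2 t))) • u = -(y + (-(y.2 t)) • u) := by
          module
        rw [hneg, QuadraticMap.map_neg,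
          QuadraticMap.map_add Qt y ((-(y.2 t)) • u), QuadraticMap.map_smul, hQu,
          QuadraticMap.polar_smul_right] at h1
        simp only [smul_eq_mul] at h1
        linear_combination h1
      have hpyu : ∀ y : F × Module.Dual F V, QuadraticMap.polar Qt y u = 0 := by
        intro y
        by_cases hcy : -(y.2 t) = 0
        · have h3 := hc (y + y₁)
          have h4 := hc y₁
          rw [hcy1, one_mul] at h4
          have hsum : -((y + y₁).2 t) = 1 := by
            have : (y + y₁).2 t = y.2 t + y₁.2 t := rfl
            rw [this]
            have hy : y.2 t = 0 := by linear_combination -hcy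
            rw [hy, zero_add]
            exact hcy1
          rw [hsum, one_mul, QuadraticMap.polar_add_left, h4, add_zero] at h3
          exact h3
        · have h5 := hc y
          exact (mul_eq_zero.mp h5).resolve_left hcy
      intro z
      rw [QuadraticMap.polar_comm]
      exact hpyu z
    · -- s² ≠ 1 case
      have hne : s * s - 1 ≠ 0 := fun h => hsq (by linear_combination h)
      have huu : QuadraticMap.polar Qt u u = 0 := by
        have h3 := E u
        have hz : -(u.2 t) = 0 := by simp [hu]
        rw [hz, mul_zero, zero_mul, add_zero] at h3
        exact (mul_eq_zero.mp h3).resolve_left hne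
      intro z
      have h3 := E z
      rw [huu, mul_zero, add_zero] at h3
      exact (mul_eq_zero.mp h3).resolve_left hne
  -- u is in the radical, hence fixed by φ, contradiction
  have hmem : u ∈ LinearMap.ker Qt.polarBilin := by
    rw [LinearMap.mem_ker]
    refine LinearMap.ext fun z => ?_
    simpa using key z
  have hfix := hrad u hmem
  rw [hφu] at hfix
  have h1 : s * 1 = 1 := congrArg Prod.fst hfix
  rw [mul_one] at h1
  exact hs1 h1
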